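/- Let G be the graph on the 21 vertices {x_i, y_i, z_i : i ∈ ℤ/7ℤ} with edges {x_i, x_{i+1}}, {x_i, y_i}, {y_i, z_i}, {z_i, y_{i+1}}, {z_i, z_{i+3}} (indices modulo 7). Define μ : V → ℤ by μ(x_i) = μ(z_i) = 4 and μ(y_i) = 3 for all i. Then (μ, 10) ∈ U^(2). -/

import Mathlib

variable {V : Type*}

/-- A stable (independent) set of a graph. -/
def IsStableSet (G : SimpleGraph V) (S : Set V) : Prop :=
  ∀ u ∈ S, ∀ v ∈ S, ¬ G.Adj u v

/-- The vertex set of a cycle subgraph of `G`, given by an injective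
parametrization `c : ZMod m → V` (`m ≥ 3`) with consecutive vertices adjacent. -/
def IsCycleSet (G : SimpleGraph V) (C : Set V) : Prop :=
  ∃ (m : ℕ) (c : ZMod m → V), 3 ≤ m ∧ Function.Injective c ∧
    (∀ i, G.Adj (c i) (c (i + 1))) ∧ C = Set.range c

/-- The vertex set of an odd cycle subgraph of `G`. -/
def IsOddCycleSet (G : SimpleGraph V) (C : Set V) : Prop :=
  ∃ (m : ℕ) (c : ZMod m → V), 3 ≤ m ∧ Odd m ∧ Function.Injective c ∧
    (∀ i, G.Adj (c i) (c (i + 1))) ∧ C = Set.range c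

/-- The vertex set of a chordless odd cycle subgraph of `G`: the only edges of `G`
between vertices of the cycle are the cycle edges. -/
def IsChordlessOddCycleSet (G : SimpleGraph V) (C : Set V) : Prop :=
  ∃ (m : ℕ) (c : ZMod m → V), 3 ≤ m ∧ Odd m ∧ Function.Injective c ∧
    (∀ i, G.Adj (c i) (c (i + 1))) ∧
    (∀ i j, G.Adj (c i) (c j) → j = i + 1 ∨ i = j + 1) ∧
    C = Set.range c

/-- A maximal clique of `G`. -/
def IsMaximalClique (G : SimpleGraph V) (K : Set V) : Prop :=
  G.IsClique K ∧ ∀ K' : Set V, G.IsClique K' → K ⊆ K' → K = K'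

/-- Membership in HSTAB(G). -/
def memHSTAB (G : SimpleGraph V) (f : V → ℝ) : Prop :=
  (∀ x, 0 ≤ f x) ∧
  (∀ K : Set V, G.IsClique K → (∑ᶠ v ∈ K, f v) ≤ 1) ∧
  (∀ C : Set V, IsOddCycleSet G C → (∑ᶠ v ∈ C, f v) ≤ ((C.ncard : ℝ) - 1) / 2)

/-- Membership in TSTAB(G). -/
def memTSTAB (G : SimpleGraph V) (f : V → ℝ) : Prop :=
  (∀ x, 0 ≤ f x ∧ f x ≤ 1) ∧
  (∀ x y, G.Adj x y → f x + f y ≤ 1) ∧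
  (∀ C : Set V, IsOddCycleSet G C → (∑ᶠ v ∈ C, f v) ≤ ((C.ncard : ℝ) - 1) / 2)

/-- Membership in QSTAB(G). -/
def memQSTAB (G : SimpleGraph V) (f : V → ℝ) : Prop :=
  (∀ x, 0 ≤ f x) ∧
  (∀ K : Set V, G.IsClique K → (∑ᶠ v ∈ K, f v) ≤ 1)

/-- The stable set polytope STAB(G). -/
def STAB (G : SimpleGraph V) : Set (V → ℝ) :=
  convexHull ℝ {f : V → ℝ | ∃ S : Set V, IsStableSet G S ∧ f = S.indicator 1}

/-- The set `U^(n)` of the paper, as a predicate on pairs `(g, d)`. -/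
def memU (G : SimpleGraph V) (n : ℤ) (g : V → ℤ) (d : ℤ) : Prop :=
  (∀ v, n ≤ g v) ∧
  (∀ K : Set V, IsMaximalClique G K → (∑ᶠ v ∈ K, g v) ≤ d - n) ∧
  (∀ C : Set V, IsChordlessOddCycleSet G C → 5 ≤ C.ncard →
    2 * (∑ᶠ v ∈ C, g v) ≤ d * ((C.ncard : ℤ) - 1) - 2 * n)
/-- The 21 vertices `x_i, y_i, z_i`, `i ∈ ℤ/7ℤ`. -/
inductive Vtx : Type
  | x : ZMod 7 → Vtx
  | y : ZMod 7 → Vtx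
  | z : ZMod 7 → Vtx
  deriving DecidableEq, Fintype

/-- The oriented edge relation of the example graph. -/
def paperRel : Vtx → Vtx → Prop := fun u v =>
  (∃ i, u = Vtx.x i ∧ v = Vtx.x (i + 1)) ∨
  (∃ i, u = Vtx.x i ∧ v = Vtx.y i) ∨
  (∃ i, u = Vtx.y i ∧ v = Vtx.z i) ∨
  (∃ i, u = Vtx.z i ∧ v = Vtx.y (i + 1)) ∨
  (∃ i, u = Vtx.z i ∧ v = Vtx.z (i + 3))

instance : DecidableRel paperRel := fun u v => by
  unfold paperRel; infer_instance

/-- The example graph of the paper. -/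
def paperGraph : SimpleGraph Vtx where
  Adj u v := paperRel u v ∨ paperRel v u
  symm := ⟨fun _ _ h => Or.symm h⟩
  loopless := by
    refine ⟨?_⟩
    show ∀ a, ¬(paperRel a a ∨ paperRel a a)
    decide

/-- The function `μ` with `μ(x_i) = μ(z_i) = 4`, `μ(y_i) = 3`. -/
def muPaper : Vtx → ℤ
  | Vtx.x _ => 4
  | Vtx.y _ => 3
  | Vtx.z _ => 4


instance : DecidableRel paperGraph.Adj := fun u v =>
  inferInstanceAs (Decidable (paperRel u v ∨ paperRel v u))

/-- Explicit neighbor lists of `paperGraph`. -/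
def nbrs : Vtx → List Vtx
  | Vtx.x i => [Vtx.x (i+1), Vtx.x (i-1), Vtx.y i]
  | Vtx.y i => [Vtx.x i, Vtx.z i, Vtx.z (i-1)]
  | Vtx.z i => [Vtx.y i, Vtx.y (i+1), Vtx.z (i+3), Vtx.z (i+4)]

lemma adj_iff : ∀ a b : Vtx, paperGraph.Adj a b ↔ b ∈ nbrs a := by
  intro a b
  cases a <;> cases b <;> (rename_i i j; revert i j) <;> decide

lemma mem_nbrs : ∀ a b : Vtx, paperGraph.Adj a b → b ∈ nbrs a :=
  fun a b => (adj_iff a b).mp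

lemma edge_wt' : ∀ a : Vtx, ∀ b ∈ nbrs a, muPaper a + muPaper b ≤ 8 := by
  intro a
  cases a <;> (rename_i i; revert i) <;> decide

lemma edge_wt : ∀ a b : Vtx, paperGraph.Adj a b → muPaper a + muPaper b ≤ 8 :=
  fun a b h => edge_wt' a b (mem_nbrs a b h)

lemma triangle_free' : ∀ a : Vtx, ∀ b ∈ nbrs a, ∀ c ∈ nbrs b, c ∈ nbrs a → False := by
  intro a
  cases a <;> (rename_i i; revert i) <;> decide

lemma triangle_free : ∀ a b c : Vtx, paperGraph.Adj a b → paperGraph.Adj a c →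
    paperGraph.Adj b c → False :=
  fun a b c hab hac hbc =>
    triangle_free' a b (mem_nbrs a b hab) c (mem_nbrs b c hbc) (mem_nbrs a c hac)

lemma five_tuple_wt : ∀ a : Vtx, ∀ b ∈ nbrs a, ∀ c ∈ nbrs b, ∀ d ∈ nbrs c, ∀ e ∈ nbrs d,
    a ∈ nbrs e → muPaper a + muPaper b + muPaper c + muPaper d + muPaper e ≤ 18 := by
  intro a
  cases a <;> (rename_i i; revert i) <;> decide

lemma mu_le4 : ∀ v : Vtx, muPaper v ≤ 4 := by intro v; cases v <;> simp [muPaper]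

lemma mu_ge2 : ∀ v : Vtx, 2 ≤ muPaper v := by intro v; cases v <;> simp [muPaper]

lemma clique_wt (K : Set Vtx) (hK : paperGraph.IsClique K) : (∑ᶠ v ∈ K, muPaper v) ≤ 8 := by
  have hfin : K.Finite := Set.toFinite K
  have hle : K.ncard ≤ 2 := by
    by_contra h
    push_neg at h
    obtain ⟨t, htK, ht3⟩ := Set.exists_subset_card_eq (s := K) (n := 3) h
    rw [Set.ncard_eq_three] at ht3
    obtain ⟨a, b, c, hab, hac, hbc, rfl⟩ := ht3
    exact triangle_free a b c
      (hK (htK (by simp)) (htK (by simp)) hab)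
      (hK (htK (by simp)) (htK (by simp)) hac)
      (hK (htK (by simp)) (htK (by simp)) hbc)
  obtain h0 | h1 | h2 : K.ncard = 0 ∨ K.ncard = 1 ∨ K.ncard = 2 := by omega
  · rw [(Set.ncard_eq_zero hfin).mp h0, finsum_mem_empty]; norm_num
  · obtain ⟨a, rfl⟩ := Set.ncard_eq_one.mp h1
    rw [finsum_mem_singleton]
    have := mu_le4 a; omega
  · obtain ⟨a, b, hab, rfl⟩ := Set.ncard_eq_two.mp h2
    rw [finsum_mem_pair hab]
    exact edge_wt a b (hK (by simp) (by simp) hab)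

/-- `(μ, 10) ∈ U^(2)`. -/
theorem stmt13 : memU paperGraph 2 muPaper 10 := by
  refine ⟨mu_ge2, ?_, ?_⟩
  · intro K hK
    have := clique_wt K hK.1
    omega
  · rintro C ⟨m, c, hm3, hmodd, hinj, hadj, -, rfl⟩ h5
    obtain h7 | h5' : 7 ≤ m ∨ m = 5 := by
      obtain ⟨k, hk⟩ := hmodd
      by_contra hcon
      push_neg at hcon
      have hcard5 : (Set.range c).ncard = m := by
        haveI : NeZero m := ⟨by omega⟩
        rw [← Set.image_univ, ← Finset.coe_univ, ← Finset.coe_image, Set.ncard_coe_finset,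
          Finset.card_image_of_injective _ hinj, Finset.card_univ, ZMod.card]
      omega
    · haveI : NeZero m := ⟨by omega⟩
      have hcard : (Set.range c).ncard = m := by
        rw [← Set.image_univ, ← Finset.coe_univ, ← Finset.coe_image, Set.ncard_coe_finset,
          Finset.card_image_of_injective _ hinj, Finset.card_univ, ZMod.card]
      have hsum : (∑ᶠ v ∈ Set.range c, muPaper v) = ∑ i : ZMod m, muPaper (c i) := by
        rw [finsum_mem_range hinj, finsum_eq_sum_of_fintype]
      have hb : (∑ i : ZMod m, muPaper (c i)) ≤ (m : ℤ) * 4 := by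
        calc (∑ i : ZMod m, muPaper (c i)) ≤ ∑ _i : ZMod m, (4 : ℤ) :=
              Finset.sum_le_sum fun i _ => mu_le4 (c i)
          _ = (m : ℤ) * 4 := by
              rw [Finset.sum_const, Finset.card_univ, ZMod.card, nsmul_eq_mul]
      rw [hcard, hsum]
      have : (7 : ℤ) ≤ (m : ℤ) := by exact_mod_cast h7
      linarith
    · subst h5'
      have hcard : (Set.range c).ncard = 5 := by
        rw [← Set.image_univ, ← Finset.coe_univ, ← Finset.coe_image, Set.ncard_coe_finset,
          Finset.card_image_of_injective _ hinj, Finset.card_univ, ZMod.card]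
      have hsum : (∑ᶠ v ∈ Set.range c, muPaper v) = ∑ i : ZMod 5, muPaper (c i) := by
        rw [finsum_mem_range hinj, finsum_eq_sum_of_fintype]
      have e0 := hadj 0
      have e1 := hadj 1
      have e2 := hadj 2
      have e3 := hadj 3
      have e4 := hadj 4
      rw [show ((0 : ZMod 5) + 1) = 1 from by decide] at e0
      rw [show ((1 : ZMod 5) + 1) = 2 from by decide] at e1
      rw [show ((2 : ZMod 5) + 1) = 3 from by decide] at e2
      rw [show ((3 : ZMod 5) + 1) = 4 from by decide] at e3
      rw [show ((4 : ZMod 5) + 1) = 0 from by decide] at e4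
      have key := five_tuple_wt (c 0) (c 1) (mem_nbrs _ _ e0) (c 2) (mem_nbrs _ _ e1)
        (c 3) (mem_nbrs _ _ e2) (c 4) (mem_nbrs _ _ e3) (mem_nbrs _ _ e4)
      have huniv : (Finset.univ : Finset (ZMod 5)) = ({0, 1, 2, 3, 4} : Finset (ZMod 5)) := by
        decide
      have hS : (∑ i : ZMod 5, muPaper (c i)) =
          muPaper (c 0) + muPaper (c 1) + muPaper (c 2) + muPaper (c 3) + muPaper (c 4) := by
        rw [huniv]
        rw [Finset.sum_insert (by decide), Finset.sum_insert (by decide),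
          Finset.sum_insert (by decide), Finset.sum_insert (by decide), Finset.sum_singleton]
        ring
      rw [hcard, hsum, hS]
      norm_num
      omega
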